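/- Let δ ∈ (0, 1/2), w > 0, and ε > 0. If σ ≥ w·√(2·ln(1/(2δ)) + 2ε)/ε, then for any two means μ, μ' with |μ − μ'| ≤ w, the Gaussian densities satisfy: for all x outside a set of probability at most δ under N(μ, σ²), the density ratio N(μ,σ²)(x)/N(μ',σ²)(x) is at most e^ε. -/

import Mathlib

open MeasureTheory ProbabilityTheory Real

lemma gauss_half_Ioi (a s : ℝ) (hs : 0 < s) :
    ∫ x in Set.Ioi a, gaussianPDFReal a ⟨s^2, sq_nonneg s⟩ x = 1/2 := by
  have hsq : (0:ℝ) < 2 * π * s^2 := by positivity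
  have hsqrt : (0:ℝ) < Real.sqrt (2 * π * s^2) := Real.sqrt_pos.2 hsq
  simp only [gaussianPDFReal, NNReal.coe_mk]
  rw [integral_const_mul]
  change (√(2 * π * s ^ 2))⁻¹ * ∫ x in Set.Ioi a, rexp (-(x - a) ^ 2 / (2 * s ^ 2)) = 1 / 2
  have hshift : ∫ x in Set.Ioi (0:ℝ), rexp (- (x)^2 / (2 * s^2))
      = ∫ x in Set.Ioi a, rexp (- (x - a)^2 / (2 * s^2)) := by
    have h := (measurePreserving_add_right (volume : Measure ℝ) a).setIntegral_preimage_emb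
      (measurableEmbedding_addRight a) (fun x => rexp (- (x - a)^2 / (2 * s^2))) (Set.Ioi a)
    simpa using h
  rw [← hshift]
  have hpt : ∀ x : ℝ, - x^2 / (2 * s^2) = -((2*s^2)⁻¹) * x^2 := by
    intro x; field_simp
  simp_rw [hpt]
  rw [integral_gaussian_Ioi]
  have h2 : π / (2 * s^2)⁻¹ = 2 * π * s^2 := by field_simp
  rw [h2]
  field_simp

lemma gauss_tail_Ioi (m s u : ℝ) (hs : 0 < s) (hu : 0 ≤ u) :
    ∫ x in Set.Ioi (m + u), gaussianPDFReal m ⟨s^2, sq_nonneg s⟩ x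
      ≤ Real.exp (-u^2/(2*s^2)) / 2 := by
  have hbound : ∀ x ∈ Set.Ioi (m + u),
      gaussianPDFReal m ⟨s^2, sq_nonneg s⟩ x
        ≤ Real.exp (-u^2/(2*s^2)) * gaussianPDFReal (m + u) ⟨s^2, sq_nonneg s⟩ x := by
    intro x hx
    simp only [Set.mem_Ioi] at hx
    simp only [gaussianPDFReal, NNReal.coe_mk]
    have hsqrt : (0:ℝ) < Real.sqrt (2 * π * s^2) := Real.sqrt_pos.2 (by positivity)
    have hexp : rexp (- (x - m)^2 / (2 * s^2))
        ≤ rexp (-u^2/(2*s^2)) * rexp (- (x - (m + u))^2 / (2 * s^2)) := by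
      rw [← Real.exp_add, Real.exp_le_exp, ← add_div, div_le_div_iff₀ (by positivity) (by positivity)]
      nlinarith [mul_nonneg hu (le_of_lt (sub_pos.2 hx)), sq_nonneg s]
    calc (Real.sqrt (2 * π * s^2))⁻¹ * rexp (- (x - m)^2 / (2 * s^2))
        ≤ (Real.sqrt (2 * π * s^2))⁻¹ *
            (rexp (-u^2/(2*s^2)) * rexp (- (x - (m + u))^2 / (2 * s^2))) :=
          mul_le_mul_of_nonneg_left hexp (le_of_lt (inv_pos.2 hsqrt))
      _ = rexp (-u^2/(2*s^2)) *
            ((Real.sqrt (2 * π * s^2))⁻¹ * rexp (- (x - (m + u))^2 / (2 * s^2))) := by ring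
  calc ∫ x in Set.Ioi (m + u), gaussianPDFReal m ⟨s^2, sq_nonneg s⟩ x
      ≤ ∫ x in Set.Ioi (m + u),
          Real.exp (-u^2/(2*s^2)) * gaussianPDFReal (m + u) ⟨s^2, sq_nonneg s⟩ x := by
        apply setIntegral_mono_on
        · exact (integrable_gaussianPDFReal _ _).restrict
        · exact ((integrable_gaussianPDFReal _ _).const_mul _).restrict
        · exact measurableSet_Ioi
        · exact hbound
    _ = Real.exp (-u^2/(2*s^2)) * ∫ x in Set.Ioi (m + u),
          gaussianPDFReal (m + u) ⟨s^2, sq_nonneg s⟩ x := integral_const_mul _ _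
    _ = Real.exp (-u^2/(2*s^2)) / 2 := by rw [gauss_half_Ioi (m + u) s hs]; ring

lemma gauss_tail_Iio (m s u : ℝ) (hs : 0 < s) (hu : 0 ≤ u) :
    ∫ x in Set.Iio (m - u), gaussianPDFReal m ⟨s^2, sq_nonneg s⟩ x
      ≤ Real.exp (-u^2/(2*s^2)) / 2 := by
  have hrefl : ∫ x in Set.Iio (m - u), gaussianPDFReal m ⟨s^2, sq_nonneg s⟩ x
      = ∫ x in Set.Ioi (m + u), gaussianPDFReal m ⟨s^2, sq_nonneg s⟩ x := by
    have h1 : (fun x : ℝ => 2*m - x) = (fun y : ℝ => y + 2*m) ∘ (fun x : ℝ => -x) := by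
      ext x; simp [sub_eq_neg_add, add_comm]
    have hmp : MeasurePreserving (fun x : ℝ => 2*m - x) volume volume := by
      rw [h1]
      exact (measurePreserving_add_right volume (2*m)).comp (Measure.measurePreserving_neg _)
    have hemb : MeasurableEmbedding (fun x : ℝ => 2*m - x) := by
      rw [h1]
      exact (measurableEmbedding_addRight (2*m)).comp (MeasurableEquiv.neg ℝ).measurableEmbedding
    have h := hmp.setIntegral_preimage_emb hemb
      (fun x => gaussianPDFReal m ⟨s^2, sq_nonneg s⟩ x) (Set.Ioi (m + u))
    have hpre : (fun x : ℝ => 2*m - x) ⁻¹' Set.Ioi (m + u) = Set.Iio (m - u) := by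
      ext x
      simp only [Set.mem_preimage, Set.mem_Ioi, Set.mem_Iio]
      constructor <;> intro h <;> linarith
    rw [hpre] at h
    rw [← h]
    apply setIntegral_congr_fun measurableSet_Iio
    intro x _
    simp only [gaussianPDFReal, NNReal.coe_mk]
    congr 2
    ring
  rw [hrefl]
  exact gauss_tail_Ioi m s u hs hu


private lemma arith_ratio (d x μ ε σ c : ℝ) (hx : d*(x-μ) ≤ c) (hc : c = ε*σ^2 - d^2/2) :
    -(x-μ)^2 - -(x-(μ-d))^2 ≤ ε*(2*σ^2) := by nlinarith

private lemma arith_cpos (e s w d c : ℝ) (hw : 0 < w) (h3 : e*s^2 ≥ 2*w^2)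
    (hd2 : d^2 ≤ w^2) (hc : c = e*s^2 - d^2/2) : 0 < c := by
  nlinarith [mul_pos hw hw]

private lemma arith_key (e s w R : ℝ) (he : 0 < e) (hw : 0 < w)
    (h3 : e^2*s^2 ≥ w^2*R^2 + 2*e*w^2) : e*s^2 - w^2/2 - w*(s*R) ≥ 0 := by
  nlinarith [sq_nonneg (e*s - w*R), mul_pos he hw, mul_pos hw hw]

private lemma arith_T_neg (T d w e s c : ℝ) (hT0 : 0 ≤ T) (h1 : -w ≤ d) (hd2 : d^2 ≤ w^2)
    (hkey : e*s^2 - w^2/2 - w*T ≥ 0) (hc : c = e*s^2 - d^2/2) : T * -d ≤ c := by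
  nlinarith [mul_nonneg hT0 (by linarith : (0:ℝ) ≤ w + d)]

private lemma arith_T_pos (T d w e s c : ℝ) (hT0 : 0 ≤ T) (h1 : d ≤ w) (hd2 : d^2 ≤ w^2)
    (hkey : e*s^2 - w^2/2 - w*T ≥ 0) (hc : c = e*s^2 - d^2/2) : T * d ≤ c := by
  nlinarith [mul_nonneg hT0 (by linarith : (0:ℝ) ≤ w - d)]

private lemma arith_pt_neg (d x μ u c : ℝ) (h : 0 ≤ -d * (x - (μ - u))) (hcu : -d * u = c) :
    d * (x - μ) ≤ c := by nlinarith

private lemma arith_pt_pos (d x μ u c : ℝ) (h : 0 ≤ d * ((μ + u) - x)) (hcu : d * u = c) :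
    d * (x - μ) ≤ c := by nlinarith

set_option maxHeartbeats 1000000 in
theorem gaussian_mechanism_pointwise_dp
    (δ w ε σ : ℝ) (hδ : δ ∈ Set.Ioo (0:ℝ) (1/2)) (hw : 0 < w) (hε : 0 < ε)
    (hσ : σ ≥ w * Real.sqrt (2 * Real.log (1 / (2 * δ)) + 2 * ε) / ε)
    (μ μ' : ℝ) (hμ : |μ - μ'| ≤ w) :
    ∃ A : Set ℝ, MeasurableSet A ∧
      gaussianReal μ ⟨σ ^ 2, sq_nonneg σ⟩ A ≤ ENNReal.ofReal δ ∧
      ∀ x ∉ A,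
        gaussianPDFReal μ ⟨σ ^ 2, sq_nonneg σ⟩ x /
          gaussianPDFReal μ' ⟨σ ^ 2, sq_nonneg σ⟩ x ≤ Real.exp ε := by
  obtain ⟨hδ0, hδ2⟩ := hδ
  set L : ℝ := Real.log (1 / (2 * δ)) with hL
  have hL0 : 0 < L := Real.log_pos (by rw [lt_div_iff₀ (by linarith)]; linarith)
  set S : ℝ := Real.sqrt (2 * L + 2 * ε) with hS
  have hS2 : S^2 = 2 * L + 2 * ε := Real.sq_sqrt (by linarith)
  have hSpos : 0 < S := Real.sqrt_pos.2 (by linarith)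
  have hσpos : 0 < σ := lt_of_lt_of_le (by positivity) hσ
  have hσ2 : σ * ε ≥ w * S := by
    rw [ge_iff_le, div_le_iff₀ hε] at hσ; linarith
  have hεσ2 : ε^2 * σ^2 ≥ w^2 * (2*L + 2*ε) := by
    nlinarith [mul_pos hw hSpos]
  set d : ℝ := μ - μ' with hd
  set c : ℝ := ε * σ^2 - d^2/2 with hc
  have habs := abs_le.1 hμ
  have hd2 : d^2 ≤ w^2 := by nlinarith [habs.1, habs.2]
  have hεσ3 : ε * σ^2 ≥ 2 * w^2 := by
    nlinarith [mul_pos hL0 (mul_pos hw hw), mul_pos hε hw]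
  have hcpos : 0 < c := arith_cpos ε σ w d c hw hεσ3 hd2 hc
  set R : ℝ := Real.sqrt (2 * L) with hR
  have hR2 : R^2 = 2 * L := Real.sq_sqrt (by linarith)
  have hR0 : 0 ≤ R := Real.sqrt_nonneg _
  set T : ℝ := σ * R with hT
  have hT0 : 0 ≤ T := by positivity
  have h3 : ε^2*σ^2 ≥ w^2*R^2 + 2*ε*w^2 := by nlinarith
  have hkey : ε * σ^2 - w^2/2 - w * T ≥ 0 := hT ▸ arith_key ε σ w R hε hw h3
  have hvne : (⟨σ^2, sq_nonneg σ⟩ : NNReal) ≠ 0 := by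
    intro h
    have h2 := congrArg NNReal.toReal h
    change σ^2 = (0:ℝ) at h2
    nlinarith
  have hexp2δ : Real.exp (-L) = 2 * δ := by
    rw [hL, one_div, Real.log_inv, neg_neg, Real.exp_log (by linarith)]
  have hexp_tail : ∀ u : ℝ, T ≤ u → Real.exp (-u^2/(2*σ^2))/2 ≤ δ := by
    intro u hu
    have hu2 : u^2 ≥ σ^2 * (2*L) := by nlinarith
    have hle : Real.exp (-u^2/(2*σ^2)) ≤ Real.exp (-L) := by
      apply Real.exp_le_exp.2
      rw [div_le_iff₀ (by positivity)]
      nlinarith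
    rw [hexp2δ] at hle
    linarith
  have hpoint : ∀ x : ℝ, d * (x - μ) ≤ c →
      gaussianPDFReal μ ⟨σ ^ 2, sq_nonneg σ⟩ x /
        gaussianPDFReal μ' ⟨σ ^ 2, sq_nonneg σ⟩ x ≤ Real.exp ε := by
    intro x hx
    have hpos := gaussianPDFReal_pos μ' ⟨σ ^ 2, sq_nonneg σ⟩ x hvne
    rw [div_le_iff₀ hpos]
    simp only [gaussianPDFReal, NNReal.coe_mk]
    have hsqrt : (0:ℝ) < Real.sqrt (2 * π * σ^2) := Real.sqrt_pos.2 (by positivity)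
    have hexp : rexp (- (x - μ)^2 / (2 * σ^2))
        ≤ rexp ε * rexp (- (x - μ')^2 / (2 * σ^2)) := by
      rw [← Real.exp_add, Real.exp_le_exp]
      have h2s : (0:ℝ) < 2 * σ^2 := by positivity
      rw [← sub_le_iff_le_add, div_sub_div_same, div_le_iff₀ h2s]
      have hμ' : μ' = μ - d := by rw [hd]; ring
      rw [hμ']
      exact arith_ratio d x μ ε σ c hx hc
    calc (Real.sqrt (2 * π * σ^2))⁻¹ * rexp (- (x - μ)^2 / (2 * σ^2))
        ≤ (Real.sqrt (2 * π * σ^2))⁻¹ *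
            (rexp ε * rexp (- (x - μ')^2 / (2 * σ^2))) :=
          mul_le_mul_of_nonneg_left hexp (le_of_lt (inv_pos.2 hsqrt))
      _ = rexp ε * ((Real.sqrt (2 * π * σ^2))⁻¹ * rexp (- (x - μ')^2 / (2 * σ^2))) := by ring
  rcases lt_trichotomy d 0 with hdlt | hdeq | hdgt
  · -- d < 0 : lower tail
    set u : ℝ := c / (-d) with hu
    have hdpos : 0 < -d := by linarith
    have hupos : 0 < u := div_pos hcpos hdpos
    have hcu : -d * u = c := by
      rw [hu, mul_comm, div_mul_cancel₀ _ (ne_of_gt hdpos)]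
    have huT : T ≤ u := by
      rw [hu, le_div_iff₀ hdpos]
      exact arith_T_neg T d w ε σ c hT0 habs.1 hd2 hkey hc
    refine ⟨Set.Iio (μ - u), measurableSet_Iio, ?_, ?_⟩
    · rw [gaussianReal_apply_eq_integral μ hvne]
      apply ENNReal.ofReal_le_ofReal
      calc ∫ x in Set.Iio (μ - u), gaussianPDFReal μ ⟨σ^2, sq_nonneg σ⟩ x
          ≤ Real.exp (-u^2/(2*σ^2))/2 := gauss_tail_Iio μ σ u hσpos (le_of_lt hupos)
        _ ≤ δ := hexp_tail u huT
    · intro x hx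
      simp only [Set.mem_Iio, not_lt] at hx
      apply hpoint
      exact arith_pt_neg d x μ u c (mul_nonneg (le_of_lt hdpos) (sub_nonneg.2 hx)) hcu
  · -- d = 0
    refine ⟨∅, MeasurableSet.empty, by simp [le_of_lt hδ0], ?_⟩
    intro x _
    apply hpoint
    rw [hdeq]
    simpa using le_of_lt hcpos
  · -- d > 0 : upper tail
    set u : ℝ := c / d with hu
    have hupos : 0 < u := div_pos hcpos hdgt
    have hcu : d * u = c := by
      rw [hu, mul_comm, div_mul_cancel₀ _ (ne_of_gt hdgt)]
    have huT : T ≤ u := by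
      rw [hu, le_div_iff₀ hdgt]
      exact arith_T_pos T d w ε σ c hT0 habs.2 hd2 hkey hc
    refine ⟨Set.Ioi (μ + u), measurableSet_Ioi, ?_, ?_⟩
    · rw [gaussianReal_apply_eq_integral μ hvne]
      apply ENNReal.ofReal_le_ofReal
      calc ∫ x in Set.Ioi (μ + u), gaussianPDFReal μ ⟨σ^2, sq_nonneg σ⟩ x
          ≤ Real.exp (-u^2/(2*σ^2))/2 := gauss_tail_Ioi μ σ u hσpos (le_of_lt hupos)
        _ ≤ δ := hexp_tail u huT
    · intro x hx
      simp only [Set.mem_Ioi, not_lt] at hx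
      apply hpoint
      exact arith_pt_pos d x μ u c (mul_nonneg (le_of_lt hdgt) (sub_nonneg.2 hx)) hcu
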